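/- Let k be a positive integer, (P, <) a finite poset, and ℓ a positive integer with ℓ < |P|/k. Then at least one of the following holds: (1) there exist k pairwise disjoint subsets A₁, …, A_k of P, each of size at least ℓ, with A₁ < A₂ < … < A_k; (2) there exists a subset Q of P with |Q| ≥ 7|P|/(16k) such that every x ∈ Q has fewer than 4√(|Q|ℓ) elements of Q below it; (3) there exists a subset Q of P with |Q| ≥ 7|P|/(16k) such that every x ∈ Q has fewer than 4√(|Q|ℓ) elements of Q above it. -/

import Mathlib

open Finset

section Helpers

variable {P : Type*} [PartialOrder P] [Fintype P]
  [DecidableRel ((· < ·) : P → P → Prop)]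

/-- elements strictly below `x` -/
def Dn (x : P) : Finset P := Finset.univ.filter (· < x)
/-- elements strictly above `x` -/
def Upp (x : P) : Finset P := Finset.univ.filter (x < ·)
/-- open interval -/
def Iv (a b : P) : Finset P := Finset.univ.filter (fun z => a < z ∧ z < b)

lemma mem_Dn {x y : P} : y ∈ Dn x ↔ y < x := by simp [Dn]
lemma mem_Upp {x y : P} : y ∈ Upp x ↔ x < y := by simp [Upp]
lemma mem_Iv {a b z : P} : z ∈ Iv a b ↔ a < z ∧ z < b := by simp [Iv]

lemma Iv_subset_Dn (a b : P) : Iv a b ⊆ Dn b := fun z hz => mem_Dn.2 (mem_Iv.1 hz).2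
lemma Iv_subset_Upp (a b : P) : Iv a b ⊆ Upp a := fun z hz => mem_Upp.2 (mem_Iv.1 hz).1
lemma Dn_subset_Dn {y x : P} (h : y < x) : Dn y ⊆ Dn x :=
  fun z hz => mem_Dn.2 ((mem_Dn.1 hz).trans h)
lemma Iv_subset_Iv {z y x : P} (h : y < x) : Iv z y ⊆ Iv z x :=
  fun w hw => mem_Iv.2 ⟨(mem_Iv.1 hw).1, (mem_Iv.1 hw).2.trans h⟩

/-- `Wt l t x` : there is a "fat chain" of length `t` ending at `x`. -/
def Wt (l : ℕ) : ℕ → P → Prop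
  | 0, _ => True
  | 1, x => l ≤ (Dn x).card
  | (t+2), x => ∃ y : P, y < x ∧ l ≤ (Iv y x).card ∧ Wt l (t+1) y

lemma Wt_mono_lt {l t : ℕ} {y x : P} (hw : Wt l t y) (hyx : y < x) : Wt l t x := by
  match t with
  | 0 => trivial
  | 1 => exact le_trans hw (card_le_card (Dn_subset_Dn hyx))
  | (s+2) =>
    obtain ⟨z, hzy, hfat, hwz⟩ := hw
    exact ⟨z, hzy.trans hyx, le_trans hfat (card_le_card (Iv_subset_Iv hyx)), hwz⟩

lemma Wt_step {l t : ℕ} {y x : P} (hw : Wt l t y) (hyx : y < x)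
    (hfat : l ≤ (Iv y x).card) : Wt l (t+1) x := by
  match t with
  | 0 => exact le_trans hfat (card_le_card (Iv_subset_Dn y x))
  | (s+1) => exact ⟨y, hyx, hfat, hw⟩

lemma Wt_anti {l : ℕ} : ∀ {t : ℕ} {x : P}, Wt l (t+1) x → Wt l t x := by
  intro t
  induction t with
  | zero => intro x _; trivial
  | succ s ih =>
    intro x hw
    obtain ⟨y, hyx, hfat, hwy⟩ := hw
    match s with
    | 0 => exact le_trans hfat (card_le_card (Iv_subset_Dn y x))
    | (u+1) => exact ⟨y, hyx, hfat, ih hwy⟩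

lemma Wt_anti_le {l : ℕ} : ∀ {t : ℕ} {x : P} {s : ℕ}, Wt l t x → s ≤ t → Wt l s x := by
  intro t
  induction t with
  | zero => intro x s hw hst; obtain rfl : s = 0 := Nat.le_zero.1 hst; exact hw
  | succ u ih =>
    intro x s hw hst
    rcases Nat.eq_or_lt_of_le hst with h | h
    · exact h ▸ hw
    · exact ih (Wt_anti hw) (by omega)


lemma Wt_tower {l : ℕ} : ∀ {t : ℕ} {x : P}, Wt l (t+1) x →
    ∃ A : Fin (t+1) → Finset P, (∀ i, (A i).card = l) ∧
      (∀ i j, i < j → ∀ a ∈ A i, ∀ b ∈ A j, a < b) ∧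
      (∀ i, ∀ a ∈ A i, a < x) := by
  intro t
  induction t with
  | zero =>
    intro x hw
    obtain ⟨B, hBsub, hBcard⟩ := Finset.exists_subset_card_eq hw
    refine ⟨fun _ => B, fun _ => hBcard, ?_, ?_⟩
    · intro i j hij
      exact absurd (Fin.lt_def.mp hij) (by omega)
    · intro i a ha; exact mem_Dn.1 (hBsub ha)
  | succ s ih =>
    intro x hw
    obtain ⟨y, hyx, hfat, hwy⟩ := hw
    obtain ⟨A', hc', ho', hb'⟩ := ih hwy
    obtain ⟨B, hBsub, hBcard⟩ := Finset.exists_subset_card_eq hfat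
    refine ⟨Fin.snoc A' B, ?_, ?_, ?_⟩
    · intro i
      induction i using Fin.lastCases with
      | last => simp [Fin.snoc_last, hBcard]
      | cast i' => simp [Fin.snoc_castSucc, hc']
    · intro i j hij a ha b hb
      induction j using Fin.lastCases with
      | last =>
        have hine : i ≠ Fin.last _ := ne_of_lt hij
        obtain ⟨i', rfl⟩ := Fin.exists_castSucc_eq.2 hine
        rw [Fin.snoc_castSucc] at ha
        rw [Fin.snoc_last] at hb
        exact (hb' i' a ha).trans (mem_Iv.1 (hBsub hb)).1
      | cast j' =>
        have hine : i ≠ Fin.last _ := ne_of_lt (hij.trans_le (Fin.le_last _))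
        obtain ⟨i', rfl⟩ := Fin.exists_castSucc_eq.2 hine
        rw [Fin.snoc_castSucc] at ha hb
        exact ho' i' j' (by exact_mod_cast hij) a ha b hb
    · intro i a ha
      induction i using Fin.lastCases with
      | last =>
        rw [Fin.snoc_last] at ha
        exact (mem_Iv.1 (hBsub ha)).2
      | cast i' =>
        rw [Fin.snoc_castSucc] at ha
        exact (hb' i' a ha).trans hyx

lemma Wt_tower_top {l t : ℕ} {x : P} (hw : Wt l (t+1) x) (hu : l ≤ (Upp x).card) :
    ∃ A : Fin (t+2) → Finset P, (∀ i, l ≤ (A i).card) ∧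
      (∀ i j, i < j → ∀ a ∈ A i, ∀ b ∈ A j, a < b) := by
  obtain ⟨A', hc', ho', hb'⟩ := Wt_tower hw
  obtain ⟨B, hBsub, hBcard⟩ := Finset.exists_subset_card_eq hu
  refine ⟨Fin.snoc A' B, ?_, ?_⟩
  · intro i
    induction i using Fin.lastCases with
    | last => simp [Fin.snoc_last, hBcard]
    | cast i' => rw [Fin.snoc_castSucc, hc']
  · intro i j hij a ha b hb
    induction j using Fin.lastCases with
    | last =>
      have hine : i ≠ Fin.last _ := ne_of_lt hij
      obtain ⟨i', rfl⟩ := Fin.exists_castSucc_eq.2 hine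
      rw [Fin.snoc_castSucc] at ha
      rw [Fin.snoc_last] at hb
      exact (hb' i' a ha).trans (mem_Upp.1 (hBsub hb))
    | cast j' =>
      have hine : i ≠ Fin.last _ := ne_of_lt (hij.trans_le (Fin.le_last _))
      obtain ⟨i', rfl⟩ := Fin.exists_castSucc_eq.2 hine
      rw [Fin.snoc_castSucc] at ha hb
      exact ho' i' j' (by exact_mod_cast hij) a ha b hb

lemma tower_case {k l : ℕ} (A : Fin k → Finset P) (hc : ∀ i, l ≤ (A i).card)
    (ho : ∀ i j, i < j → ∀ a ∈ A i, ∀ b ∈ A j, a < b) :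
    ∃ A : Fin k → Finset P,
      (∀ i j, i ≠ j → Disjoint (A i) (A j)) ∧
      (∀ i, l ≤ (A i).card) ∧
      (∀ i j : Fin k, i < j → ∀ a ∈ A i, ∀ b ∈ A j, a < b) := by
  refine ⟨A, ?_, hc, ho⟩
  intro i j hij
  rcases lt_or_gt_of_ne hij with h | h
  · exact Finset.disjoint_left.mpr (fun {z} hz1 hz2 => absurd (ho i j h z hz1 z hz2) (lt_irrefl z))
  · exact Finset.disjoint_left.mpr (fun {z} hz1 hz2 => absurd (ho j i h z hz2 z hz1) (lt_irrefl z))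

end Helpers

set_option maxHeartbeats 1000000 in
theorem layered_or_sparse {P : Type*} [PartialOrder P] [Fintype P]
    [DecidableRel ((· < ·) : P → P → Prop)] (k ℓ : ℕ) (hk : 0 < k) (hℓ : 0 < ℓ)
    (hℓk : (ℓ : ℝ) < (Fintype.card P : ℝ) / k) :
    (∃ A : Fin k → Finset P,
      (∀ i j, i ≠ j → Disjoint (A i) (A j)) ∧
      (∀ i, ℓ ≤ (A i).card) ∧
      (∀ i j : Fin k, i < j → ∀ a ∈ A i, ∀ b ∈ A j, a < b)) ∨
    (∃ Q : Finset P, (7 * Fintype.card P : ℝ) / (16 * k) ≤ Q.card ∧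
      ∀ x ∈ Q, ((Q.filter fun y => y < x).card : ℝ) < 4 * Real.sqrt (Q.card * ℓ)) ∨
    (∃ Q : Finset P, (7 * Fintype.card P : ℝ) / (16 * k) ≤ Q.card ∧
      ∀ x ∈ Q, ((Q.filter fun y => x < y).card : ℝ) < 4 * Real.sqrt (Q.card * ℓ)) := by
  classical
  by_cases htower : ∃ A : Fin k → Finset P, (∀ i, ℓ ≤ (A i).card) ∧
      (∀ i j, i < j → ∀ a ∈ A i, ∀ b ∈ A j, a < b)
  · obtain ⟨A, hc, ho⟩ := htower
    exact Or.inl (tower_case A hc ho)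
  by_contra hcon
  push_neg at hcon
  obtain ⟨-, h2, h3⟩ := hcon
  -- basic numbers
  have hkR : (0:ℝ) < k := by exact_mod_cast hk
  have hlR : (1:ℝ) ≤ (ℓ:ℝ) := by exact_mod_cast hℓ
  have hkl : (k:ℝ) * (ℓ:ℝ) < (Fintype.card P : ℝ) := by
    rw [lt_div_iff₀ hkR] at hℓk
    nlinarith [hℓk]
  have hnpos : (0:ℝ) < (Fintype.card P : ℝ) := by nlinarith
  set q0 : ℝ := 7 * (Fintype.card P : ℝ) / (16 * (k:ℝ)) with hq0def
  clear_value q0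
  have hq0l : 7 * (ℓ:ℝ) / 16 < q0 := by
    rw [hq0def, div_lt_div_iff₀ (by norm_num) (by positivity)]
    nlinarith
  have hq0pos : (0:ℝ) < q0 := by nlinarith
  set s : ℝ := 4 * Real.sqrt (q0 * ℓ) with hsdef
  clear_value s
  have hq0l_nonneg : (0:ℝ) ≤ q0 * ℓ := by positivity
  have hs_sq : s^2 = 16 * (q0 * (ℓ:ℝ)) := by
    rw [hsdef, mul_pow, Real.sq_sqrt hq0l_nonneg]; ring
  have hs_pos : 0 < s := by
    rw [hsdef]
    have : 0 < Real.sqrt (q0 * ℓ) := Real.sqrt_pos.2 (by nlinarith)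
    linarith
  have hls : (ℓ:ℝ) ≤ s := by
    rw [hsdef]
    have h1 : ((ℓ:ℝ))^2 ≤ 16 * (q0 * ℓ) := by nlinarith
    have h2' : Real.sqrt ((ℓ:ℝ)^2) ≤ Real.sqrt (16 * (q0*ℓ)) := Real.sqrt_le_sqrt h1
    rw [Real.sqrt_sq (by positivity)] at h2'
    rw [show (16:ℝ) * (q0*ℓ) = 4^2 * (q0*ℓ) by norm_num, Real.sqrt_mul (by positivity),
      Real.sqrt_sq (by norm_num)] at h2'
    exact h2'
  -- threshold transfer
  have hsmono : ∀ Q : Finset P, q0 ≤ (Q.card : ℝ) → s ≤ 4 * Real.sqrt ((Q.card : ℝ) * ℓ) := by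
    intro Q hQ
    rw [hsdef]
    have : Real.sqrt (q0 * ℓ) ≤ Real.sqrt ((Q.card:ℝ) * ℓ) :=
      Real.sqrt_le_sqrt (by nlinarith)
    linarith
  -- peeling tools
  have T2 : ∀ S : Finset P,
      ((S.filter (fun x => ((S.filter (fun y => y < x)).card : ℝ) < s)).card : ℝ) < q0 := by
    intro S
    by_contra hge
    push_neg at hge
    set Q : Finset P := S.filter (fun x => ((S.filter (fun y => y < x)).card : ℝ) < s) with hQdef
    obtain ⟨x, hxQ, hxheavy⟩ := h2 Q hge
    have hxQ' := hxQ
    rw [hQdef, Finset.mem_filter] at hxQ'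
    have hsub : (Q.filter (fun y => y < x)).card ≤ (S.filter (fun y => y < x)).card := by
      apply Finset.card_le_card
      intro z hz
      rw [Finset.mem_filter] at hz ⊢
      refine ⟨?_, hz.2⟩
      have := hz.1
      rw [hQdef, Finset.mem_filter] at this
      exact this.1
    have hth : s ≤ 4 * Real.sqrt (((Q.card:ℝ)) * ℓ) := hsmono Q hge
    have hc : ((Q.filter (fun y => y < x)).card : ℝ) ≤ ((S.filter (fun y => y < x)).card : ℝ) := by
      exact_mod_cast hsub
    linarith [hxQ'.2]
  have T3 : ∀ S : Finset P,
      ((S.filter (fun x => ((S.filter (fun y => x < y)).card : ℝ) < s)).card : ℝ) < q0 := by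
    intro S
    by_contra hge
    push_neg at hge
    set Q : Finset P := S.filter (fun x => ((S.filter (fun y => x < y)).card : ℝ) < s) with hQdef
    obtain ⟨x, hxQ, hxheavy⟩ := h3 Q hge
    have hxQ' := hxQ
    rw [hQdef, Finset.mem_filter] at hxQ'
    have hsub : (Q.filter (fun y => x < y)).card ≤ (S.filter (fun y => x < y)).card := by
      apply Finset.card_le_card
      intro z hz
      rw [Finset.mem_filter] at hz ⊢
      refine ⟨?_, hz.2⟩
      have := hz.1
      rw [hQdef, Finset.mem_filter] at this
      exact this.1
    have hth : s ≤ 4 * Real.sqrt (((Q.card:ℝ)) * ℓ) := hsmono Q hge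
    have hc : ((Q.filter (fun y => x < y)).card : ℝ) ≤ ((S.filter (fun y => x < y)).card : ℝ) := by
      exact_mod_cast hsub
    linarith [hxQ'.2]
  -- k = 1 impossible
  rcases Nat.lt_or_ge k 2 with hk1 | hk2
  · have hk1' : k = 1 := by omega
    subst hk1'
    have hlen : ℓ ≤ Fintype.card P := by exact_mod_cast (by nlinarith : (ℓ:ℝ) ≤ (Fintype.card P:ℝ))
    obtain ⟨B, -, hBcard⟩ := Finset.exists_subset_card_eq (le_trans hlen (le_of_eq (Finset.card_univ).symm))
    exact htower ⟨fun _ => B, fun _ => hBcard.ge, fun i j hij => absurd (Fin.lt_def.mp hij) (by omega)⟩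
  -- escape: no fat chain of length k-1 with room above
  have hE : ∀ x : P, Wt ℓ (k-1) x → ((Upp x).card : ℝ) < (ℓ:ℝ) := by
    intro x hw
    by_contra hle
    push_neg at hle
    have hu : ℓ ≤ (Upp x).card := by exact_mod_cast hle
    have e1 : k - 2 + 1 = k - 1 := by omega
    rw [← e1] at hw
    obtain ⟨A0, hc0, ho0⟩ := Wt_tower_top hw hu
    have e2 : k - 2 + 2 = k := by omega
    refine htower ⟨fun i => A0 (Fin.cast e2.symm i), fun i => hc0 _, ?_⟩
    intro i j hij a ha b hb
    refine ho0 _ _ ?_ a ha b hb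
    rw [Fin.lt_def] at hij ⊢
    simpa using hij
  -- V is small
  set V : Finset P := Finset.univ.filter (fun x => Wt ℓ (k-1) x) with hVdef
  clear_value V
  have hVsmall : (V.card : ℝ) < q0 := by
    by_contra hge
    push_neg at hge
    obtain ⟨x, hxV, hxheavy⟩ := h3 V hge
    have hx : Wt ℓ (k-1) x := by
      have := hxV
      rw [hVdef, Finset.mem_filter] at this
      exact this.2
    have hup := hE x hx
    have hsub : (V.filter (fun y => x < y)).card ≤ (Upp x).card := by
      apply Finset.card_le_card
      intro z hz
      exact mem_Upp.2 (Finset.mem_filter.1 hz).2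
    have hth : s ≤ 4 * Real.sqrt (((V.card:ℝ)) * ℓ) := hsmono V hge
    have hc : ((V.filter (fun y => x < y)).card : ℝ) ≤ ((Upp x).card : ℝ) := by
      exact_mod_cast hsub
    linarith [hls]
  -- pigeonhole over classes
  set Vc : Finset P := Finset.univ.filter (fun x => ¬ Wt ℓ (k-1) x) with hVcdef
  clear_value Vc
  have hVcn : V.card + Vc.card = Fintype.card P := by
    rw [hVdef, hVcdef, Finset.card_filter_add_card_filter_not, Finset.card_univ]
  set hgt : P → ℕ := fun x => Nat.findGreatest (fun t => Wt ℓ t x) (k-2) with hhdef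
  obtain ⟨t, htk, hFbig⟩ : ∃ t, t ≤ k - 2 ∧ Vc.card ≤ (k-1) * (Vc.filter (fun x => hgt x = t)).card := by
    by_contra hno
    push_neg at hno
    have hfib : Vc.card = ∑ u ∈ Finset.range (k-1), (Vc.filter (fun x => hgt x = u)).card := by
      apply Finset.card_eq_sum_card_fiberwise
      intro x _
      rw [Finset.mem_coe, Finset.mem_range]
      have : hgt x ≤ k-2 := Nat.findGreatest_le _
      omega
    have hsum : ∑ u ∈ Finset.range (k-1), (k-1) * (Vc.filter (fun x => hgt x = u)).card
        < ∑ _u ∈ Finset.range (k-1), Vc.card := by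
      apply Finset.sum_lt_sum_of_nonempty
      · rw [Finset.nonempty_range_iff]; omega
      · intro u hu
        exact hno u (by rw [Finset.mem_range] at hu; omega)
    rw [← Finset.mul_sum, ← hfib, Finset.sum_const, Finset.card_range, smul_eq_mul] at hsum
    omega
  set F : Finset P := Vc.filter (fun x => hgt x = t) with hFdef
  clear_value F
  have thin : ∀ a ∈ F, ∀ b ∈ F, a < b → (Iv a b).card < ℓ := by
    intro a ha b hb hab
    by_contra hfat
    push_neg at hfat
    rw [hFdef, Finset.mem_filter] at ha hb
    obtain ⟨hb1, hb2⟩ := hb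
    obtain ⟨ha1, ha2⟩ := ha
    have hwa : Wt ℓ t a := by
      have hspec : Wt ℓ (hgt a) a := by
        rw [hhdef]
        exact Nat.findGreatest_spec (P := fun u => Wt ℓ u a) (Nat.zero_le _) trivial
      rwa [ha2] at hspec
    have hwb : Wt ℓ (t+1) b := Wt_step hwa hab hfat
    rcases Nat.lt_or_ge t (k-2) with hcase | hcase
    · have hle : t+1 ≤ hgt b := by
        rw [hhdef]
        exact Nat.le_findGreatest (by omega) hwb
      omega
    · have hwb' : Wt ℓ (k-1) b := by
        rw [show k-1 = t+1 by omega]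
        exact hwb
      rw [hVcdef, Finset.mem_filter] at hb1
      exact hb1.2 hwb'
  -- truncation
  set c4 : ℕ := Nat.ceil (4*q0) with hc4def
  clear_value c4
  obtain ⟨F', hF'sub, hF'card⟩ := Finset.exists_subset_card_eq (min_le_left F.card c4)
  set μ : ℝ := ((min F.card c4 : ℕ) : ℝ) with hμdef
  clear_value μ
  have hq716 : 7/16 < q0 := by linarith
  have hμkey : μ^2 ≤ 32*q0*μ - 64*q0^2 := by
    rcases le_or_gt c4 F.card with hcase | hcase
    · -- μ = c4 ∈ [4q0, 4q0+1)
      have hμeq : μ = (c4:ℝ) := by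
        rw [hμdef]
        norm_cast
        rw [min_eq_right hcase]
      have h4a : 4*q0 ≤ μ := by
        rw [hμeq, hc4def]
        exact Nat.le_ceil _
      have h4b : μ < 4*q0 + 1 := by
        rw [hμeq, hc4def]
        exact Nat.ceil_lt_add_one (by positivity)
      have hp0 : 0 ≤ (μ - 4*q0) * (4*q0 + 1 - μ) :=
        mul_nonneg (by linarith) (by linarith)
      nlinarith [hp0, hq716, hq0pos, h4a]
    · -- μ = F.card, (k-1)μ > n - q0, μ < 4q0
      have hμeq : μ = (F.card:ℝ) := by
        rw [hμdef]
        norm_cast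
        rw [min_eq_left hcase.le]
      have hub : μ ≤ 4*q0 := by
        have h1 : F.card + 1 ≤ c4 := hcase
        have h2' : ((F.card:ℝ)) + 1 ≤ (c4:ℝ) := by exact_mod_cast h1
        have h3' : (c4:ℝ) < 4*q0 + 1 := by
          rw [hc4def]
          exact Nat.ceil_lt_add_one (by positivity)
        rw [hμeq]; linarith
      have hkm1 : ((k:ℝ) - 1) = ((k-1 : ℕ):ℝ) := by
        have : (1:ℕ) ≤ k := hk
        push_cast [Nat.cast_sub this]
        ring
      have hlow : (Fintype.card P:ℝ) - q0 < ((k:ℝ)-1) * μ := by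
        have h1 : (Vc.card:ℝ) ≤ ((k:ℝ)-1)*(F.card:ℝ) := by
          rw [hkm1]
          exact_mod_cast hFbig
        have h2' : (V.card:ℝ) + (Vc.card:ℝ) = (Fintype.card P:ℝ) := by exact_mod_cast hVcn
        rw [hμeq]
        linarith [hVsmall]
      have hn16 : 7 * (Fintype.card P:ℝ) = 16*(k:ℝ)*q0 := by
        rw [hq0def]
        field_simp
      have hkR2 : (2:ℝ) ≤ (k:ℝ) := by exact_mod_cast hk2
      -- key products
      have hp1 : 0 ≤ (4*q0 - μ) * (7*((k:ℝ)-1)*μ - (16*(k:ℝ)-7)*q0) := by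
        apply mul_nonneg
        · linarith
        · nlinarith [hlow]
      nlinarith [hp1, hlow, hub, hq716, hq0pos, hkR2, mul_pos hq0pos hq0pos]
  -- peeled heavy kernel G
  set Q2 : Finset P := F'.filter (fun x => ((F'.filter (fun y => y < x)).card : ℝ) < s) with hQ2def
  clear_value Q2
  set Q3 : Finset P := F'.filter (fun x => ((F'.filter (fun y => x < y)).card : ℝ) < s) with hQ3def
  clear_value Q3
  set G : Finset P := F' \ (Q2 ∪ Q3) with hGdef
  clear_value G
  have hGcard : μ - 2*q0 < (G.card : ℝ) := by
    have hsplit : F'.card ≤ G.card + (Q2.card + Q3.card) := by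
      calc F'.card ≤ (G ∪ (Q2 ∪ Q3)).card := Finset.card_le_card (by
              intro z hz
              by_cases hzq : z ∈ Q2 ∪ Q3
              · exact Finset.mem_union_right _ hzq
              · exact Finset.mem_union_left _ (by rw [hGdef]; exact Finset.mem_sdiff.2 ⟨hz, hzq⟩))
        _ ≤ G.card + (Q2 ∪ Q3).card := Finset.card_union_le _ _
        _ ≤ G.card + (Q2.card + Q3.card) := by
              exact Nat.add_le_add_left (Finset.card_union_le _ _) _
    have h2' := T2 F'
    have h3' := T3 F'
    rw [← hQ2def] at h2'
    rw [← hQ3def] at h3'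
    have : (F'.card : ℝ) ≤ (G.card : ℝ) + ((Q2.card:ℝ) + (Q3.card:ℝ)) := by exact_mod_cast hsplit
    rw [hF'card] at this
    rw [hμdef]
    linarith
  have hGdeg : ∀ x ∈ G, s ≤ ((F'.filter (fun y => y < x)).card : ℝ) ∧
      s ≤ ((F'.filter (fun y => x < y)).card : ℝ) := by
    intro x hx
    rw [hGdef, Finset.mem_sdiff, Finset.mem_union] at hx
    obtain ⟨hxF, hxn⟩ := hx
    constructor
    · by_contra hlt; push_neg at hlt
      exact hxn (Or.inl (by rw [hQ2def]; exact Finset.mem_filter.2 ⟨hxF, hlt⟩))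
    · by_contra hlt; push_neg at hlt
      exact hxn (Or.inr (by rw [hQ3def]; exact Finset.mem_filter.2 ⟨hxF, hlt⟩))
  -- triple counting
  set S3 : Finset (P × P × P) :=
    (F' ×ˢ F' ×ˢ F').filter (fun p => p.1 < p.2.1 ∧ p.2.1 < p.2.2) with hS3def
  clear_value S3
  have hcount1 : S3.card = ∑ x ∈ F', (F'.filter (fun y => y < x)).card * (F'.filter (fun y => x < y)).card := by
    rw [hS3def]
    rw [Finset.card_eq_sum_card_fiberwise (f := fun p : P × P × P => p.2.1) (t := F')
      (fun p hp => by
        have h' := Finset.mem_filter.1 hp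
        have hm := Finset.mem_product.1 h'.1
        exact (Finset.mem_product.1 hm.2).1)]
    apply Finset.sum_congr rfl
    intro x hx
    have hkey : ((F' ×ˢ F' ×ˢ F').filter (fun p => p.1 < p.2.1 ∧ p.2.1 < p.2.2)).filter
        (fun p => p.2.1 = x) =
        ((F'.filter (fun y => y < x)) ×ˢ (F'.filter (fun y => x < y))).map
          ⟨fun ab => (ab.1, x, ab.2), by
            intro ab ab' h
            simp only [Prod.mk.injEq] at h
            exact Prod.ext h.1 h.2.2⟩ := by
      ext ⟨a, y, b⟩
      simp only [Finset.mem_filter, Finset.mem_product, Finset.mem_map,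
        Function.Embedding.coeFn_mk, Prod.mk.injEq]
      constructor
      · rintro ⟨⟨⟨haF, hyF, hbF⟩, hay, hyb⟩, rfl⟩
        exact ⟨(a, b), ⟨⟨haF, hay⟩, hbF, hyb⟩, rfl⟩
      · rintro ⟨⟨a', b'⟩, ⟨⟨haF, hax⟩, hbF, hxb⟩, rfl, rfl, rfl⟩
        exact ⟨⟨⟨haF, hx, hbF⟩, hax, hxb⟩, rfl⟩
    rw [hkey, Finset.card_map, Finset.card_product]
  have hlower : (G.card : ℝ) * (16 * (q0 * ℓ)) ≤ (S3.card : ℝ) := by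
    have hsubG : G ⊆ F' := by rw [hGdef]; exact Finset.sdiff_subset
    have h1 : ∑ x ∈ G, ((F'.filter (fun y => y < x)).card * (F'.filter (fun y => x < y)).card)
        ≤ S3.card := by
      rw [hcount1]
      exact Finset.sum_le_sum_of_subset hsubG
    calc (G.card:ℝ) * (16*(q0*ℓ))
        = ∑ _x ∈ G, (16*(q0*(ℓ:ℝ))) := by rw [Finset.sum_const, nsmul_eq_mul]
      _ ≤ ∑ x ∈ G, ((F'.filter (fun y => y < x)).card : ℝ) * ((F'.filter (fun y => x < y)).card : ℝ) := by
          apply Finset.sum_le_sum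
          intro x hx
          obtain ⟨hd, hu⟩ := hGdeg x hx
          have hmul : s*s ≤ ((F'.filter (fun y => y < x)).card : ℝ) * ((F'.filter (fun y => x < y)).card : ℝ) :=
            mul_le_mul hd hu hs_pos.le (le_trans hs_pos.le hd)
          calc 16*(q0*(ℓ:ℝ)) = s^2 := hs_sq.symm
            _ = s*s := sq s
            _ ≤ _ := hmul
      _ = ((∑ x ∈ G, (F'.filter (fun y => y < x)).card * (F'.filter (fun y => x < y)).card : ℕ) : ℝ) := by
          push_cast
          rfl
      _ ≤ (S3.card:ℝ) := by exact_mod_cast h1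
  have hupper : 2 * (S3.card : ℝ) ≤ μ^2 * ((ℓ:ℝ) - 1) := by
    set Pr : Finset (P × P) := (F' ×ˢ F').filter (fun q => q.1 < q.2) with hPrdef
    have hmapPr : ∀ p ∈ S3, (fun p : P × P × P => (p.1, p.2.2)) p ∈ Pr := by
      intro p hp
      rw [hS3def, Finset.mem_filter] at hp
      obtain ⟨hpm, hlt1, hlt2⟩ := hp
      have hm := Finset.mem_product.1 hpm
      have hm2 := Finset.mem_product.1 hm.2
      rw [hPrdef, Finset.mem_filter, Finset.mem_product]
      exact ⟨⟨hm.1, hm2.2⟩, hlt1.trans hlt2⟩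
    have hfib : S3.card = ∑ q ∈ Pr, (S3.filter (fun p => (p.1, p.2.2) = q)).card :=
      Finset.card_eq_sum_card_fiberwise hmapPr
    have hfibb : ∀ q ∈ Pr, (S3.filter (fun p => (p.1, p.2.2) = q)).card ≤ ℓ - 1 := by
      intro q hq
      rw [hPrdef, Finset.mem_filter, Finset.mem_product] at hq
      obtain ⟨⟨hq1, hq2⟩, hqlt⟩ := hq
      have hIv : (Iv q.1 q.2).card < ℓ := thin _ (hF'sub hq1) _ (hF'sub hq2) hqlt
      have hinj : (S3.filter (fun p => (p.1, p.2.2) = q)).card ≤ (Iv q.1 q.2).card := by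
        apply Finset.card_le_card_of_injOn (fun p => p.2.1)
        · intro p hp
          rw [Finset.mem_coe, Finset.mem_filter] at hp
          obtain ⟨hpS, hpq⟩ := hp
          rw [hS3def, Finset.mem_filter] at hpS
          obtain ⟨-, hlt1, hlt2⟩ := hpS
          rw [Prod.ext_iff] at hpq
          rw [Finset.mem_coe, mem_Iv]
          constructor
          · rw [← hpq.1]; exact hlt1
          · rw [← hpq.2]; exact hlt2
        · intro p hp p' hp' hmid
          rw [Finset.mem_coe, Finset.mem_filter] at hp hp'
          have e1 := hp.2
          have e2 := hp'.2
          rw [Prod.ext_iff] at e1 e2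
          have : p.1 = p'.1 := by rw [e1.1, e2.1]
          have h22 : p.2.2 = p'.2.2 := by rw [e1.2, e2.2]
          exact Prod.ext this (Prod.ext hmid h22)
      omega
    have h1 : S3.card ≤ Pr.card * (ℓ - 1) := by
      rw [hfib]
      calc ∑ q ∈ Pr, (S3.filter (fun p => (p.1, p.2.2) = q)).card
          ≤ ∑ _q ∈ Pr, (ℓ - 1) := Finset.sum_le_sum hfibb
        _ = Pr.card * (ℓ-1) := by rw [Finset.sum_const, smul_eq_mul]
    have h2' : 2 * Pr.card ≤ F'.card * F'.card := by
      have himg : (Pr.image (fun q : P × P => (q.2, q.1))).card = Pr.card :=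
        Finset.card_image_of_injective _ (fun a b hab => by
          simp only [Prod.mk.injEq] at hab
          exact Prod.ext hab.2 hab.1)
      have hdisj : Disjoint Pr (Pr.image (fun q : P × P => (q.2, q.1))) := by
        rw [Finset.disjoint_left]
        intro q hq hq2
        rw [Finset.mem_image] at hq2
        obtain ⟨r, hr, hrq⟩ := hq2
        rw [hPrdef, Finset.mem_filter] at hq hr
        have h1' := hq.2
        have h2'' := hr.2
        rw [← hrq] at h1'
        exact absurd (h2''.trans h1') (lt_irrefl _)
      have hsub2 : Pr ∪ Pr.image (fun q : P × P => (q.2, q.1)) ⊆ F' ×ˢ F' := by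
        intro q hq
        rw [Finset.mem_union] at hq
        rcases hq with hq | hq
        · rw [hPrdef] at hq; exact Finset.filter_subset _ _ hq
        · rw [Finset.mem_image] at hq
          obtain ⟨r, hr, hrq⟩ := hq
          rw [hPrdef, Finset.mem_filter, Finset.mem_product] at hr
          rw [← hrq, Finset.mem_product]
          exact ⟨hr.1.2, hr.1.1⟩
      calc 2 * Pr.card = Pr.card + (Pr.image (fun q : P × P => (q.2, q.1))).card := by
            rw [himg]; ring
        _ = (Pr ∪ Pr.image (fun q : P × P => (q.2, q.1))).card :=
            (Finset.card_union_of_disjoint hdisj).symm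
        _ ≤ (F' ×ˢ F').card := Finset.card_le_card hsub2
        _ = F'.card * F'.card := Finset.card_product _ _
    -- cast and combine
    have hμF : μ = (F'.card : ℝ) := by rw [hμdef, hF'card]
    have c1 : (S3.card:ℝ) ≤ (Pr.card:ℝ) * ((ℓ:ℝ) - 1) := by
      have : ((ℓ:ℕ) - 1 : ℕ) = (ℓ - 1 : ℕ) := rfl
      calc (S3.card:ℝ) ≤ ((Pr.card * (ℓ-1) : ℕ):ℝ) := by exact_mod_cast h1
        _ = (Pr.card:ℝ) * (((ℓ-1:ℕ)):ℝ) := by push_cast; ring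
        _ = (Pr.card:ℝ) * ((ℓ:ℝ) - 1) := by
            congr 1
            have : (1:ℕ) ≤ ℓ := hℓ
            push_cast [Nat.cast_sub this]
            ring
    have c2 : 2*(Pr.card:ℝ) ≤ μ^2 := by
      rw [hμF]
      calc 2*(Pr.card:ℝ) = ((2 * Pr.card : ℕ):ℝ) := by push_cast; ring
        _ ≤ ((F'.card * F'.card : ℕ):ℝ) := by exact_mod_cast h2'
        _ = (F'.card:ℝ)^2 := by push_cast; ring
    have hl1 : (0:ℝ) ≤ (ℓ:ℝ) - 1 := by linarith
    nlinarith [c1, c2, hl1, mul_le_mul_of_nonneg_right c2 hl1]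
  -- final contradiction
  have hμ2 : 32*q0*(μ - 2*q0) * (ℓ:ℝ) < μ^2 * (ℓ:ℝ) := by
    calc 32*q0*(μ - 2*q0) * (ℓ:ℝ) = 2 * ((μ - 2*q0) * (16 * (q0 * ℓ))) := by ring
      _ < 2 * ((G.card:ℝ) * (16 * (q0*ℓ))) := by
          have hpos : (0:ℝ) < 16 * (q0*ℓ) := by
            have := mul_pos hq0pos (lt_of_lt_of_le one_pos hlR)
            linarith
          have := mul_lt_mul_of_pos_right hGcard hpos
          linarith
      _ ≤ 2 * (S3.card : ℝ) := by linarith [hlower]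
      _ ≤ μ^2 * ((ℓ:ℝ) - 1) := hupper
      _ ≤ μ^2 * (ℓ:ℝ) := by
          have h0 : (0:ℝ) ≤ μ^2 := sq_nonneg μ
          have h1 : ((ℓ:ℝ)-1) ≤ (ℓ:ℝ) := by linarith
          exact mul_le_mul_of_nonneg_left h1 h0
  have hlpos : (0:ℝ) < (ℓ:ℝ) := by linarith
  have : 32*q0*(μ - 2*q0) < μ^2 := by
    exact lt_of_mul_lt_mul_right hμ2 hlpos.le
  nlinarith [hμkey]
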